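/- Let G be an h × n random binary matrix with i.i.d. Bernoulli(u/(d+u)) entries, k = d + u ≤ n, q = (u/k)^u (d/k)^d, 0 < δ < 1, and z = (1−δ)qh (an integer). If C(n,k)·C(k,u)·exp(−δ²qh/2) < 1, then with positive probability G is an (n, d, u; z]-disjunct matrix; in particular such a matrix exists. -/

import Mathlib

open Finset

/-- A `h × n` binary matrix `M` is `(n, d, u; z]`-disjunct. -/
def IsDisjunct {t n : ℕ} (M : Fin t → Fin n → Bool) (d u z : ℕ) : Prop :=
  ∀ S₁ S₂ : Finset (Fin n), Disjoint S₁ S₂ → S₁.card = d → S₂.card = u →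
    z ≤ (Finset.univ.filter
      (fun i => (∀ j ∈ S₂, M i j = true) ∧ (∀ j ∈ S₁, M i j = false))).card

/-- `q = (u/k)^u (d/k)^d` with `k = d + u`. -/
noncomputable def goodRowProb (d u : ℕ) : ℝ :=
  ((u : ℝ) / ((d : ℝ) + u)) ^ u * ((d : ℝ) / ((d : ℝ) + u)) ^ d

lemma key_ineq {δ : ℝ} (h0 : 0 < δ) (h1 : δ < 1) :
    δ ^ 2 / 2 ≤ δ + (1 - δ) * Real.log (1 - δ) := by
  have hx0 : 0 < 1 - δ := by linarith
  set s : ℝ := -Real.log (1 - δ) with hs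
  have hs0 : 0 < s := by
    have : Real.log (1 - δ) < 0 := Real.log_neg hx0 (by linarith)
    simp [hs]; linarith
  have hsinh : s < Real.sinh s := Real.self_lt_sinh_iff.2 hs0
  have hes : Real.exp (-s) = 1 - δ := by
    rw [hs, neg_neg, Real.exp_log hx0]
  have hes' : Real.exp s = 1 / (1 - δ) := by
    rw [hs, Real.exp_neg, Real.exp_log hx0, one_div]
  rw [Real.sinh_eq, hes, hes'] at hsinh
  have h2 : (1 - δ) * s < (1 - (1 - δ)^2) / 2 := by
    have h3 := mul_lt_mul_of_pos_left hsinh hx0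
    have h4 : (1 - δ) * ((1 / (1 - δ) - (1 - δ)) / 2) = (1 - (1 - δ)^2) / 2 := by
      field_simp
    linarith
  have hlog : Real.log (1 - δ) = -s := by simp [hs]
  rw [hlog]
  nlinarith [h2]

lemma sum_biUnion_le' {α β : Type*} [DecidableEq β] {f : β → ℝ} (hf : ∀ b, 0 ≤ f b)
    (s : Finset α) (t : α → Finset β) :
    ∑ b ∈ s.biUnion t, f b ≤ ∑ a ∈ s, ∑ b ∈ t a, f b := by
  classical
  induction s using Finset.induction_on with
  | empty => simp
  | insert _ _ hx ih =>
    rename_i a s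
    rw [Finset.biUnion_insert, Finset.sum_insert hx]
    have h2 : ∑ b ∈ (t a ∪ s.biUnion t), f b + ∑ b ∈ (t a ∩ s.biUnion t), f b
        = ∑ b ∈ t a, f b + ∑ b ∈ s.biUnion t, f b := Finset.sum_union_inter
    have h3 : 0 ≤ ∑ b ∈ (t a ∩ s.biUnion t), f b :=
      Finset.sum_nonneg fun b _ => hf b
    linarith

lemma sum_prod_eq_pow {α : Type*} [Fintype α] [DecidableEq α] (m : ℕ) (F : α → ℝ) :
    ∑ g : Fin m → α, ∏ i, F (g i) = (∑ a, F a) ^ m := by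
  have h := Finset.prod_univ_sum (fun _ : Fin m => (univ : Finset α)) (fun _ a => F a)
  simp only [Fintype.piFinset_univ] at h
  rw [← h, Finset.prod_const, Finset.card_univ, Fintype.card_fin]

lemma sum_wrow_good {n : ℕ} (p : ℝ) (S₁ S₂ : Finset (Fin n)) (hdisj : Disjoint S₁ S₂) :
    ∑ r ∈ univ.filter (fun r : Fin n → Bool =>
        (∀ j ∈ S₂, r j = true) ∧ (∀ j ∈ S₁, r j = false)),
      ∏ j, (if r j then p else 1 - p) = p ^ S₂.card * (1 - p) ^ S₁.card := by
  classical
  set t : Fin n → Finset Bool :=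
    fun j => if j ∈ S₂ then {true} else if j ∈ S₁ then {false} else univ with ht
  have hfilter : univ.filter (fun r : Fin n → Bool =>
      (∀ j ∈ S₂, r j = true) ∧ (∀ j ∈ S₁, r j = false)) = Fintype.piFinset t := by
    ext r
    simp only [mem_filter, mem_univ, true_and, Fintype.mem_piFinset]
    constructor
    · rintro ⟨h2, h1⟩ j
      by_cases hj2 : j ∈ S₂
      · simp [ht, hj2, h2 j hj2]
      · by_cases hj1 : j ∈ S₁
        · simp [ht, hj2, hj1, h1 j hj1]
        · simp [ht, hj2, hj1]
    · intro hr
      refine ⟨fun j hj => ?_, fun j hj => ?_⟩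
      · have := hr j; simpa [ht, hj] using this
      · have hj2 : j ∉ S₂ := fun h => (Finset.disjoint_left.1 hdisj hj) h
        have := hr j; simpa [ht, hj, hj2] using this
  rw [hfilter, ← Finset.prod_univ_sum t (fun _ b => if b then p else 1 - p)]
  have hg : ∀ j, (∑ b ∈ t j, (if b then p else 1 - p))
      = if j ∈ S₂ then p else if j ∈ S₁ then 1 - p else 1 := by
    intro j
    by_cases hj2 : j ∈ S₂
    · simp [ht, hj2]
    · by_cases hj1 : j ∈ S₁
      · simp [ht, hj2, hj1]
      · simp [ht, hj2, hj1]
  rw [Finset.prod_congr rfl fun j _ => hg j]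
  rw [← Finset.prod_subset (Finset.subset_univ (S₁ ∪ S₂)) (by
    intro x _ hx
    simp only [mem_union, not_or] at hx
    simp [hx.1, hx.2])]
  rw [Finset.prod_union hdisj]
  have h1 : ∏ j ∈ S₁, (if j ∈ S₂ then p else if j ∈ S₁ then 1 - p else 1)
      = (1 - p) ^ S₁.card := by
    refine Finset.prod_eq_pow_card fun j hj => ?_
    have : j ∉ S₂ := fun h => (Finset.disjoint_left.1 hdisj hj) h
    simp [this, hj]
  have h2 : ∏ j ∈ S₂, (if j ∈ S₂ then p else if j ∈ S₁ then 1 - p else 1)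
      = p ^ S₂.card := Finset.prod_eq_pow_card fun j hj => by simp [hj]
  rw [h1, h2]; ring

lemma pair_bound {n h : ℕ} (p : ℝ) (hp0 : 0 ≤ p) (hp1 : p ≤ 1) {c : ℝ} (hc0 : 0 < c)
    (hc1 : c ≤ 1) (z : ℕ) (S₁ S₂ : Finset (Fin n)) (hdisj : Disjoint S₁ S₂) :
    (∑ M ∈ univ.filter (fun M : Fin h → Fin n → Bool =>
        (univ.filter (fun i =>
          (∀ j ∈ S₂, M i j = true) ∧ (∀ j ∈ S₁, M i j = false))).card < z),
      ∏ i, ∏ j, (if M i j then p else 1 - p)) * c ^ z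
      ≤ (c * (p ^ S₂.card * (1 - p) ^ S₁.card)
          + (1 - p ^ S₂.card * (1 - p) ^ S₁.card)) ^ h := by
  classical
  set Q : ℝ := p ^ S₂.card * (1 - p) ^ S₁.card with hQ
  set wrow : (Fin n → Bool) → ℝ := fun r => ∏ j, (if r j then p else 1 - p) with hwrow
  set F : (Fin n → Bool) → ℝ := fun r =>
    wrow r * (if (∀ j ∈ S₂, r j = true) ∧ (∀ j ∈ S₁, r j = false) then c else 1) with hF
  have hw0 : ∀ r, 0 ≤ wrow r := fun r =>
    Finset.prod_nonneg fun j _ => by by_cases hb : r j <;> simp [hb] <;> linarith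
  have hF0 : ∀ r, 0 ≤ F r := fun r => mul_nonneg (hw0 r) (by split <;> linarith)
  have htotal : ∑ r : Fin n → Bool, wrow r = 1 := by
    rw [hwrow]
    rw [sum_prod_eq_pow n (fun b : Bool => if b then p else 1 - p)]
    have : (∑ b : Bool, if b then p else 1 - p) = 1 := by simp
    rw [this, one_pow]
  have hgood := sum_wrow_good p S₁ S₂ hdisj
  have hFsum : ∑ r : Fin n → Bool, F r = c * Q + (1 - Q) := by
    rw [← Finset.sum_filter_add_sum_filter_not univ
      (fun r : Fin n → Bool => (∀ j ∈ S₂, r j = true) ∧ (∀ j ∈ S₁, r j = false)) F]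
    have e1 : ∑ r ∈ univ.filter (fun r : Fin n → Bool =>
        (∀ j ∈ S₂, r j = true) ∧ (∀ j ∈ S₁, r j = false)), F r = c * Q := by
      have hcongr : ∀ r ∈ univ.filter (fun r : Fin n → Bool =>
          (∀ j ∈ S₂, r j = true) ∧ (∀ j ∈ S₁, r j = false)), F r = c * wrow r := by
        intro r hr
        simp only [hF]
        rw [if_pos (Finset.mem_filter.1 hr).2, mul_comm]
      rw [Finset.sum_congr rfl hcongr, ← Finset.mul_sum]
      have h6 : ∑ r ∈ univ.filter (fun r : Fin n → Bool =>
          (∀ j ∈ S₂, r j = true) ∧ (∀ j ∈ S₁, r j = false)), wrow r = Q := by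
        simp only [hwrow]; rw [hgood]
      rw [h6]
    have e2 : ∑ r ∈ univ.filter (fun r : Fin n → Bool =>
        ¬((∀ j ∈ S₂, r j = true) ∧ (∀ j ∈ S₁, r j = false))), F r = 1 - Q := by
      have hcongr2 : ∀ r ∈ univ.filter (fun r : Fin n → Bool =>
          ¬((∀ j ∈ S₂, r j = true) ∧ (∀ j ∈ S₁, r j = false))), F r = wrow r := by
        intro r hr
        simp only [hF]
        rw [if_neg (Finset.mem_filter.1 hr).2, mul_one]
      rw [Finset.sum_congr rfl hcongr2]
      have h5 := Finset.sum_filter_add_sum_filter_not univ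
        (fun r : Fin n → Bool => (∀ j ∈ S₂, r j = true) ∧ (∀ j ∈ S₁, r j = false)) wrow
      rw [htotal] at h5
      have h6 : ∑ r ∈ univ.filter (fun r : Fin n → Bool =>
          (∀ j ∈ S₂, r j = true) ∧ (∀ j ∈ S₁, r j = false)), wrow r = Q := by
        simp only [hwrow]; rw [hgood]
      linarith
    rw [e1, e2]
  have hstep : ∀ M ∈ univ.filter (fun M : Fin h → Fin n → Bool =>
      (univ.filter (fun i =>
        (∀ j ∈ S₂, M i j = true) ∧ (∀ j ∈ S₁, M i j = false))).card < z),
      (∏ i, wrow (M i)) * c ^ z ≤ ∏ i, F (M i) := by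
    intro M hM
    have hXz : (univ.filter (fun i =>
        (∀ j ∈ S₂, M i j = true) ∧ (∀ j ∈ S₁, M i j = false))).card ≤ z :=
      le_of_lt (Finset.mem_filter.1 hM).2
    have hprod : ∏ i, F (M i) = (∏ i, wrow (M i)) * c ^ (univ.filter (fun i =>
        (∀ j ∈ S₂, M i j = true) ∧ (∀ j ∈ S₁, M i j = false))).card := by
      rw [hF]; dsimp only
      rw [Finset.prod_mul_distrib]
      congr 1
      rw [Finset.prod_ite, Finset.prod_const, Finset.prod_const, one_pow, mul_one]
    rw [hprod]
    exact mul_le_mul_of_nonneg_left (pow_le_pow_of_le_one hc0.le hc1 hXz)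
      (Finset.prod_nonneg fun i _ => hw0 _)
  calc (∑ M ∈ univ.filter (fun M : Fin h → Fin n → Bool =>
        (univ.filter (fun i =>
          (∀ j ∈ S₂, M i j = true) ∧ (∀ j ∈ S₁, M i j = false))).card < z),
      ∏ i, ∏ j, (if M i j then p else 1 - p)) * c ^ z
      = ∑ M ∈ univ.filter (fun M : Fin h → Fin n → Bool =>
        (univ.filter (fun i =>
          (∀ j ∈ S₂, M i j = true) ∧ (∀ j ∈ S₁, M i j = false))).card < z),
        (∏ i, wrow (M i)) * c ^ z := by rw [Finset.sum_mul]
    _ ≤ ∑ M ∈ univ.filter (fun M : Fin h → Fin n → Bool =>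
        (univ.filter (fun i =>
          (∀ j ∈ S₂, M i j = true) ∧ (∀ j ∈ S₁, M i j = false))).card < z),
        ∏ i, F (M i) := Finset.sum_le_sum hstep
    _ ≤ ∑ M : Fin h → Fin n → Bool, ∏ i, F (M i) :=
        Finset.sum_le_sum_of_subset_of_nonneg (Finset.filter_subset _ _)
          (fun M _ _ => Finset.prod_nonneg fun i _ => hF0 _)
    _ = (∑ r : Fin n → Bool, F r) ^ h := sum_prod_eq_pow h F
    _ = (c * Q + (1 - Q)) ^ h := by rw [hFsum]

set_option maxHeartbeats 2000000 in
/-- If `C(n,k)·C(k,u)·exp(-δ²qh/2) < 1` and `z = (1-δ)qh`, then (with positive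
probability a random matrix works, so) an `(n, d, u; z]`-disjunct `h × n` matrix exists. -/
theorem exists_disjunct_of_union_bound
    (d u n h z : ℕ) (hd : 0 < d) (hu : 0 < u) (hk : d + u ≤ n)
    (δ : ℝ) (hδ0 : 0 < δ) (hδ1 : δ < 1)
    (hz : (z : ℝ) = (1 - δ) * goodRowProb d u * h)
    (hbound : ((n.choose (d + u) : ℕ) : ℝ) * (((d + u).choose u : ℕ) : ℝ) *
        Real.exp (-(δ ^ 2 * goodRowProb d u * h) / 2) < 1) :
    ∃ M : Fin h → Fin n → Bool, IsDisjunct M d u z := by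
  classical
  by_contra hno
  push_neg at hno
  set q : ℝ := goodRowProb d u with hqdef
  have hd' : (0:ℝ) < (d:ℝ) := by exact_mod_cast hd
  have hu' : (0:ℝ) < (u:ℝ) := by exact_mod_cast hu
  have hdu : (0:ℝ) < (d:ℝ) + u := by linarith
  set p : ℝ := (u:ℝ) / ((d:ℝ) + u) with hpdef
  have hp0' : 0 < p := div_pos hu' hdu
  have hp0 : 0 ≤ p := hp0'.le
  have hp1 : p ≤ 1 := by rw [hpdef, div_le_one hdu]; linarith
  have h1p : 1 - p = (d:ℝ) / ((d:ℝ) + u) := by rw [hpdef]; field_simp; ring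
  have hq : q = p ^ u * (1 - p) ^ d := by
    rw [hqdef, h1p, hpdef]; rfl
  have h1p0 : 0 < 1 - p := by rw [h1p]; exact div_pos hd' hdu
  have hq0 : 0 < q := by rw [hq]; exact mul_pos (pow_pos hp0' u) (pow_pos h1p0 d)
  have hq1 : q ≤ 1 := by
    rw [hq]
    have e1 : p ^ u ≤ 1 := pow_le_one₀ hp0 hp1
    have e2 : (1 - p) ^ d ≤ 1 := pow_le_one₀ h1p0.le (by linarith)
    nlinarith [pow_nonneg hp0 u, pow_nonneg h1p0.le d]
  set c : ℝ := 1 - δ with hcdef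
  have hc0 : 0 < c := by rw [hcdef]; linarith
  have hc1 : c ≤ 1 := by rw [hcdef]; linarith
  set E : ℝ := Real.exp (-(δ ^ 2 * q * (h:ℝ)) / 2) with hEdef
  set W : (Fin h → Fin n → Bool) → ℝ :=
    fun M => ∏ i, ∏ j, (if M i j then p else 1 - p) with hW
  have hW0 : ∀ M, 0 ≤ W M := fun M =>
    Finset.prod_nonneg fun i _ => Finset.prod_nonneg fun j _ => by
      by_cases hb : M i j <;> simp [hb] <;> linarith
  set Bad : Finset (Fin n) → Finset (Fin n) → Finset (Fin h → Fin n → Bool) :=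
    fun S₁ S₂ => univ.filter (fun M => (univ.filter (fun i =>
      (∀ j ∈ S₂, M i j = true) ∧ (∀ j ∈ S₁, M i j = false))).card < z) with hBad
  -- per-pair bound
  have hpairE : ∀ S₁ S₂ : Finset (Fin n), Disjoint S₁ S₂ → S₁.card = d → S₂.card = u →
      ∑ M ∈ Bad S₁ S₂, W M ≤ E := by
    intro S₁ S₂ hdisj hcard1 hcard2
    have hb := pair_bound (h := h) p hp0 hp1 hc0 hc1 z S₁ S₂ hdisj
    rw [hcard1, hcard2, ← hq] at hb
    have hcz : 0 < c ^ z := pow_pos hc0 z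
    have h1 : c * q + (1 - q) = 1 - δ * q := by rw [hcdef]; ring
    have h2 : 0 ≤ 1 - δ * q := by nlinarith
    have h3 : 1 - δ * q ≤ Real.exp (-(δ * q)) := by
      have := Real.add_one_le_exp (-(δ * q)); linarith
    have h4 : (1 - δ * q) ^ h ≤ Real.exp (-(δ * q) * h) := by
      calc (1 - δ * q) ^ h ≤ Real.exp (-(δ * q)) ^ h := pow_le_pow_left₀ h2 h3 h
        _ = Real.exp (-(δ * q) * h) := by rw [← Real.exp_nat_mul, mul_comm]
    have h5 : Real.exp ((z:ℝ) * Real.log c) = c ^ z := by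
      rw [Real.exp_nat_mul, Real.exp_log hc0]
    have key := key_ineq hδ0 hδ1
    have hqh : (0:ℝ) ≤ q * h := by positivity
    have h6 : -(δ * q) * h - (z:ℝ) * Real.log c ≤ -(δ ^ 2 * q * (h:ℝ)) / 2 := by
      rw [hz, hcdef]
      nlinarith [mul_le_mul_of_nonneg_left key hqh]
    have h7 : (c * q + (1 - q)) ^ h ≤ E * c ^ z := by
      rw [h1, hEdef, ← h5, ← Real.exp_add]
      calc (1 - δ * q) ^ h ≤ Real.exp (-(δ * q) * h) := h4
        _ ≤ Real.exp (-(δ ^ 2 * q * (h:ℝ)) / 2 + (z:ℝ) * Real.log c) := by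
            rw [Real.exp_le_exp]; linarith
    have := hb.trans h7
    exact le_of_mul_le_mul_right this hcz
  -- total weight is 1
  have htot : ∑ M : Fin h → Fin n → Bool, W M = 1 := by
    simp only [hW]
    rw [sum_prod_eq_pow h (fun r : Fin n → Bool => ∏ j, (if r j then p else 1 - p))]
    rw [sum_prod_eq_pow n (fun b : Bool => if b then p else 1 - p)]
    have : (∑ b : Bool, if b then p else 1 - p) = 1 := by simp
    rw [this, one_pow, one_pow]
  -- cover
  have hcover : (univ : Finset (Fin h → Fin n → Bool)) ⊆
      (univ.powersetCard (d + u)).biUnion (fun S =>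
        (S.powersetCard u).biUnion (fun S₂ => Bad (S \ S₂) S₂)) := by
    intro M _
    have hM := hno M
    simp only [IsDisjunct] at hM
    push_neg at hM
    obtain ⟨S₁, S₂, hdisj, hc1', hc2', hlt⟩ := hM
    refine Finset.mem_biUnion.2 ⟨S₁ ∪ S₂, ?_, Finset.mem_biUnion.2 ⟨S₂, ?_, ?_⟩⟩
    · exact Finset.mem_powersetCard.2 ⟨Finset.subset_univ _, by
        rw [Finset.card_union_of_disjoint hdisj, hc1', hc2']⟩
    · exact Finset.mem_powersetCard.2 ⟨Finset.subset_union_right, hc2'⟩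
    · simp only [hBad, Finset.union_sdiff_cancel_right hdisj]
      exact Finset.mem_filter.2 ⟨Finset.mem_univ _, hlt⟩
  -- chain of bounds
  have hsum1 : (1:ℝ) ≤ ∑ S ∈ univ.powersetCard (d + u), ∑ S₂ ∈ S.powersetCard u,
      ∑ M ∈ Bad (S \ S₂) S₂, W M := by
    calc (1:ℝ) = ∑ M : Fin h → Fin n → Bool, W M := htot.symm
      _ ≤ ∑ M ∈ (univ.powersetCard (d + u)).biUnion (fun S =>
            (S.powersetCard u).biUnion (fun S₂ => Bad (S \ S₂) S₂)), W M :=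
          Finset.sum_le_sum_of_subset_of_nonneg hcover (fun M _ _ => hW0 M)
      _ ≤ ∑ S ∈ univ.powersetCard (d + u),
            ∑ M ∈ (S.powersetCard u).biUnion (fun S₂ => Bad (S \ S₂) S₂), W M :=
          sum_biUnion_le' hW0 _ _
      _ ≤ ∑ S ∈ univ.powersetCard (d + u), ∑ S₂ ∈ S.powersetCard u,
            ∑ M ∈ Bad (S \ S₂) S₂, W M :=
          Finset.sum_le_sum fun S _ => sum_biUnion_le' hW0 _ _
  have hsum2 : ∑ S ∈ univ.powersetCard (d + u), ∑ S₂ ∈ S.powersetCard u,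
      ∑ M ∈ Bad (S \ S₂) S₂, W M
      ≤ ((n.choose (d + u) : ℕ) : ℝ) * (((d + u).choose u : ℕ) : ℝ) * E := by
    have hinner : ∀ S ∈ univ.powersetCard (d + u),
        ∑ S₂ ∈ S.powersetCard u, (∑ M ∈ Bad (S \ S₂) S₂, W M)
          ≤ (((d + u).choose u : ℕ) : ℝ) * E := by
      intro S hS
      obtain ⟨hSsub, hScard⟩ := Finset.mem_powersetCard.1 hS
      calc ∑ S₂ ∈ S.powersetCard u, (∑ M ∈ Bad (S \ S₂) S₂, W M)
          ≤ ∑ _S₂ ∈ S.powersetCard u, E := Finset.sum_le_sum (fun S₂ hS₂ => by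
            obtain ⟨h2sub, h2card⟩ := Finset.mem_powersetCard.1 hS₂
            have hdisj : Disjoint (S \ S₂) S₂ := Finset.sdiff_disjoint
            have hc1' : (S \ S₂).card = d := by
              rw [Finset.card_sdiff_of_subset h2sub, hScard, h2card]; omega
            exact hpairE (S \ S₂) S₂ hdisj hc1' h2card)
        _ = (S.powersetCard u).card • E := Finset.sum_const E
        _ = (((d + u).choose u : ℕ) : ℝ) * E := by
            rw [Finset.card_powersetCard, hScard, nsmul_eq_mul]
    calc ∑ S ∈ univ.powersetCard (d + u), ∑ S₂ ∈ S.powersetCard u,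
        ∑ M ∈ Bad (S \ S₂) S₂, W M
        ≤ ∑ _S ∈ univ.powersetCard (d + u), (((d + u).choose u : ℕ) : ℝ) * E :=
          Finset.sum_le_sum hinner
      _ = (univ.powersetCard (d + u)).card • ((((d + u).choose u : ℕ) : ℝ) * E) :=
          Finset.sum_const _
      _ = ((n.choose (d + u) : ℕ) : ℝ) * (((d + u).choose u : ℕ) : ℝ) * E := by
          rw [Finset.card_powersetCard, Finset.card_univ, Fintype.card_fin, nsmul_eq_mul]
          ring
  have hfin := hsum1.trans hsum2
  linarith
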